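/- Let (α_k)_{k≥0} be a sequence in (0,1), λ_0 = 1, and λ_{k+1} = (1−α_k) λ_k for all k ≥ 0. Suppose there exist β > 0 and an integer p > 0 such that α_k^p / λ_{k+1} ≥ β for all k ≥ 0. Then for all K ≥ 1, λ_K ≤ (p / (p + K β^{1/p}))^p. -/

import Mathlib

theorem estimate_sequence_decay (α lam : ℕ → ℝ)
    (hα : ∀ k, α k ∈ Set.Ioo (0 : ℝ) 1)
    (hlam0 : lam 0 = 1)
    (hrec : ∀ k, lam (k + 1) = (1 - α k) * lam k)
    (β : ℝ) (hβ : 0 < β) (p : ℕ) (hp : 0 < p)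
    (hratio : ∀ k, β ≤ α k ^ p / lam (k + 1)) :
    ∀ K : ℕ, 1 ≤ K →
      lam K ≤ ((p : ℝ) / ((p : ℝ) + (K : ℝ) * β ^ ((1 : ℝ) / (p : ℝ)))) ^ p := by
  intro K _
  have hαpos : ∀ k, 0 < α k := fun k => (hα k).1
  have hα1 : ∀ k, α k < 1 := fun k => (hα k).2
  have hpos : ∀ k, 0 < lam k := by
    intro k; induction k with
    | zero => rw [hlam0]; norm_num
    | succ n ih => rw [hrec]; exact mul_pos (by linarith [hα1 n]) ih
  have hppos : (0:ℝ) < p := Nat.cast_pos.mpr hp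
  have hp1 : (1:ℝ) ≤ p := by exact_mod_cast hp
  set c : ℝ := β ^ ((1:ℝ)/(p:ℝ)) with hc
  have hcpos : 0 < c := Real.rpow_pos_of_pos hβ _
  set t : ℕ → ℝ := fun k => (lam k) ^ (-(1:ℝ)/(p:ℝ)) with ht
  have htpos : ∀ k, 0 < t k := fun k => Real.rpow_pos_of_pos (hpos k) _
  have key : ∀ k, t k + c / p ≤ t (k+1) := by
    intro k
    have hX : 0 < lam (k+1) ^ ((1:ℝ)/(p:ℝ)) := Real.rpow_pos_of_pos (hpos (k+1)) _
    have hinv : ∀ j, t j = (lam j ^ ((1:ℝ)/(p:ℝ)))⁻¹ := by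
      intro j
      rw [ht, ← Real.rpow_neg (hpos j).le, neg_div]
    -- step 1 : c ≤ α k * t (k+1)
    have h1 : c ≤ α k * t (k+1) := by
      have hbl : β * lam (k+1) ≤ α k ^ p := by
        have h := hratio k
        rw [le_div_iff₀ (hpos (k+1))] at h
        linarith
      have h2 : (β * lam (k+1)) ^ ((1:ℝ)/(p:ℝ)) ≤ ((α k ^ p : ℝ)) ^ ((1:ℝ)/(p:ℝ)) :=
        Real.rpow_le_rpow (mul_pos hβ (hpos (k+1))).le hbl (by positivity)
      have h3 : ((α k ^ p : ℝ)) ^ ((1:ℝ)/(p:ℝ)) = α k := by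
        rw [← Real.rpow_natCast (α k) p, ← Real.rpow_mul (hαpos k).le,
          mul_one_div, div_self hppos.ne', Real.rpow_one]
      have h4 : (β * lam (k+1)) ^ ((1:ℝ)/(p:ℝ)) = c * lam (k+1) ^ ((1:ℝ)/(p:ℝ)) :=
        Real.mul_rpow hβ.le (hpos (k+1)).le
      rw [h3, h4] at h2
      rw [hinv, ← div_eq_mul_inv, le_div_iff₀ hX]
      exact h2
    -- step 2 : t k ≤ (1 - α k / p) * t (k+1)
    have hαp : α k / p < 1 := lt_of_le_of_lt (by
      rw [div_le_iff₀ hppos]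
      nlinarith [hαpos k, hα1 k]) (hα1 k)
    have hαp0 : 0 < 1 - α k / p := by linarith
    have hbern : (1 - α k) ≤ (1 - α k / p)^p := by
      have := one_add_mul_le_pow (a := -(α k / p)) (by nlinarith [hαpos k, hαp]) p
      have he : 1 + (p:ℝ) * (-(α k / p)) = 1 - α k := by
        field_simp
        ring
      rw [he] at this
      rwa [← sub_eq_add_neg] at this
    have hroot : (1 - α k) ^ ((1:ℝ)/(p:ℝ)) ≤ 1 - α k / p := by
      have h2 : ((1 - α k)) ^ ((1:ℝ)/(p:ℝ)) ≤ (((1 - α k / p)^p : ℝ)) ^ ((1:ℝ)/(p:ℝ)) :=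
        Real.rpow_le_rpow (by linarith [hα1 k]) hbern (by positivity)
      have h3 : (((1 - α k / p)^p : ℝ)) ^ ((1:ℝ)/(p:ℝ)) = 1 - α k / p := by
        rw [← Real.rpow_natCast (1 - α k / p) p, ← Real.rpow_mul hαp0.le,
          mul_one_div, div_self hppos.ne', Real.rpow_one]
      rwa [h3] at h2
    have hdecomp : t k = (1 - α k) ^ ((1:ℝ)/(p:ℝ)) * t (k+1) := by
      rw [hinv, hinv, hrec, Real.mul_rpow (by linarith [hα1 k]) (hpos k).le]
      have h1α : (0:ℝ) < (1 - α k) ^ ((1:ℝ)/(p:ℝ)) :=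
        Real.rpow_pos_of_pos (by linarith [hα1 k]) _
      have hY : (0:ℝ) < lam k ^ ((1:ℝ)/(p:ℝ)) := Real.rpow_pos_of_pos (hpos k) _
      field_simp
    have h2 : t k ≤ (1 - α k / p) * t (k+1) := by
      rw [hdecomp]
      exact mul_le_mul_of_nonneg_right hroot (htpos (k+1)).le
    have : (1 - α k / p) * t (k+1) = t (k+1) - (α k * t (k+1)) / p := by ring
    rw [this] at h2
    have h3 : c / p ≤ (α k * t (k+1)) / p := div_le_div_of_nonneg_right h1 hppos.le
    linarith
  -- induction : t K ≥ 1 + K * c / p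
  have hlow : ∀ k : ℕ, 1 + k * (c / p) ≤ t k := by
    intro k; induction k with
    | zero => simp [ht, hlam0]
    | succ n ih =>
      have := key n
      push_cast
      push_cast at ih
      linarith
  have hD : (0:ℝ) < ((p:ℝ) + K * c) / p := by positivity
  have hDle : ((p:ℝ) + K * c) / p ≤ t K := by
    have := hlow K
    have he : ((p:ℝ) + K * c) / p = 1 + K * (c / p) := by field_simp
    linarith [he ▸ this]
  have hpow : (((p:ℝ) + K * c) / p) ^ p ≤ (t K) ^ p :=
    pow_le_pow_left₀ hD.le hDle p
  have htp : (t K) ^ p = (lam K)⁻¹ := by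
    rw [ht, ← Real.rpow_natCast ((lam K) ^ (-(1:ℝ)/(p:ℝ))) p,
      ← Real.rpow_mul (hpos K).le]
    rw [div_mul_cancel₀ (-(1:ℝ)) hppos.ne', Real.rpow_neg_one]
  rw [htp] at hpow
  have hfin : lam K ≤ ((((p:ℝ) + K * c) / p) ^ p)⁻¹ := by
    have hA : (0:ℝ) < (((p:ℝ) + K * c) / p) ^ p := by positivity
    calc lam K = ((lam K)⁻¹)⁻¹ := (inv_inv _).symm
      _ ≤ ((((p:ℝ) + K * c) / p) ^ p)⁻¹ := by gcongr
  calc lam K ≤ ((((p:ℝ) + K * c) / p) ^ p)⁻¹ := hfin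
    _ = ((p:ℝ) / ((p:ℝ) + K * c)) ^ p := by
        rw [← inv_pow, inv_div]
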